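/- Let ⟨K,B,P,N⟩_R be a DPI and D a set of minimal diagnoses w.r.t. it with |D| ≥ 2. Then for every D_i ∈ D, the partition ⟨{D_i}, D \ {D_i}, ∅⟩ is a canonical q-partition; moreover U_D \ D_i is a query w.r.t. D whose q-partition is ⟨{D_i}, D \ {D_i}, ∅⟩. -/
import Mathlib


namespace KBDDiag

/-- A diagnosis problem instance (DPI) `⟨K,B,P,N⟩_R` over a Tarskian logic on sentences `L`. -/
structure DPI (L : Type*) where
  /-- the entailment relation of the logic -/
  entails : Set L → L → Prop
  /-- entailment is monotonic -/
  entails_mono : ∀ (X Y : Set L) (α : L), entails X α → entails (X ∪ Y) α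
  /-- entailment is idempotent -/
  entails_idem : ∀ (X A : Set L) (β : L),
    (∀ α ∈ A, entails X α) → entails (X ∪ A) β → entails X β
  /-- entailment is extensive -/
  entails_ext : ∀ (X : Set L) (α : L), α ∈ X → entails X α
  /-- the (possibly faulty) KB -/
  K : Set L
  /-- the background KB -/
  B : Set L
  /-- the positive test cases -/
  P : Set (Set L)
  /-- the negative test cases -/
  N : Set (Set L)
  /-- requirements: `r X` means the KB `X` satisfies requirement `r` -/
  R : Set (Set L → Prop)
  K_finite : K.Finite
  B_finite : B.Finite
  K_B_disjoint : K ∩ B = ∅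
  P_finite : P.Finite
  P_mem_finite : ∀ p ∈ P, Set.Finite p
  N_finite : N.Finite
  N_mem_finite : ∀ n ∈ N, Set.Finite n
  /-- violation of a requirement is monotone -/
  viol_mono : ∀ r ∈ R, ∀ X Y : Set L, X ⊆ Y → ¬ r X → ¬ r Y
  /-- requirements are preserved under adding entailed sentences -/
  sat_entailed : ∀ r ∈ R, ∀ X A : Set L, r X → (∀ α ∈ A, entails X α) → r (X ∪ A)
  /-- the background KB satisfies every requirement -/
  B_sat : ∀ r ∈ R, r B

namespace DPI

variable {L : Type*} (d : DPI L)

/-- `X ⊨ Y` : X entails every sentence of Y. -/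
def EntailsAll (X Y : Set L) : Prop := ∀ α ∈ Y, d.entails X α

/-- `U_P`, the union of all positive test cases. -/
def UP : Set L := ⋃₀ d.P

/-- `Ks` is a solution KB w.r.t. the DPI. -/
def IsSolutionKB (Ks : Set L) : Prop :=
  (∀ r ∈ d.R, r (Ks ∪ d.B)) ∧
  (∀ p ∈ d.P, d.EntailsAll (Ks ∪ d.B) p) ∧
  (∀ n ∈ d.N, ¬ d.EntailsAll (Ks ∪ d.B) n)

/-- `D` is a diagnosis w.r.t. the DPI. -/
def IsDiagnosis (D : Set L) : Prop :=
  D ⊆ d.K ∧ d.IsSolutionKB ((d.K \ D) ∪ d.UP)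

/-- `D` is a minimal diagnosis w.r.t. the DPI. -/
def IsMinDiagnosis (D : Set L) : Prop :=
  d.IsDiagnosis D ∧ ∀ D' ⊂ D, ¬ d.IsDiagnosis D'

/-- `C` is a conflict w.r.t. the DPI. -/
def IsConflict (C : Set L) : Prop :=
  C ⊆ d.K ∧ ¬ d.IsSolutionKB (C ∪ d.UP)

/-- `C` is a minimal conflict w.r.t. the DPI. -/
def IsMinConflict (C : Set L) : Prop :=
  d.IsConflict C ∧ ∀ C' ⊂ C, ¬ d.IsConflict C'

/-- `Ks` is a maximal solution KB w.r.t. the DPI. -/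
def IsMaxSolutionKB (Ks : Set L) : Prop :=
  d.IsSolutionKB Ks ∧ ¬ ∃ K' : Set L, d.IsSolutionKB K' ∧ Ks ∩ d.K ⊂ K' ∩ d.K

/-- `K*_i = (K \ D_i) ∪ B ∪ U_P`. -/
def Kstar (Di : Set L) : Set L := (d.K \ Di) ∪ d.B ∪ d.UP

/-- `X` violates some requirement in `R` or entails some negative test case. -/
def Violates (X : Set L) : Prop :=
  (∃ r ∈ d.R, ¬ r X) ∨ (∃ n ∈ d.N, d.EntailsAll X n)

/-- `dx(X)` w.r.t. the leading diagnoses `Ds`. -/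
def dxS (Ds : Set (Set L)) (X : Set L) : Set (Set L) :=
  {Di ∈ Ds | d.EntailsAll (d.Kstar Di) X}

/-- `dnx(X)` w.r.t. the leading diagnoses `Ds`. -/
def dnxS (Ds : Set (Set L)) (X : Set L) : Set (Set L) :=
  {Di ∈ Ds | d.Violates (d.Kstar Di ∪ X)}

/-- `dz(X)` w.r.t. the leading diagnoses `Ds`. -/
def dzS (Ds : Set (Set L)) (X : Set L) : Set (Set L) :=
  Ds \ (d.dxS Ds X ∪ d.dnxS Ds X)

/-- `Q` is a query w.r.t. the leading diagnoses `Ds`. -/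
def IsQuery (Ds : Set (Set L)) (Q : Set L) : Prop :=
  Q.Nonempty ∧ (d.dxS Ds Q).Nonempty ∧ (d.dnxS Ds Q).Nonempty

/-- The canonical query `Q_can(S) = (K \ U_S) ∩ (U_D \ I_D)` w.r.t. the seed `S`. -/
def Qcan (Ds S : Set (Set L)) : Set L := (d.K \ ⋃₀ S) ∩ (⋃₀ Ds \ ⋂₀ Ds)

/-- `⟨dxp, dnxp, ∅⟩` is a canonical q-partition of `Ds`. -/
def IsCanonicalQPartition (Ds dxp dnxp : Set (Set L)) : Prop :=
  dxp ∪ dnxp = Ds ∧ dxp ∩ dnxp = ∅ ∧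
  dxp.Nonempty ∧ dxp ⊂ Ds ∧
  (d.Qcan Ds dxp).Nonempty ∧
  d.dxS Ds (d.Qcan Ds dxp) = dxp ∧
  d.dnxS Ds (d.Qcan Ds dxp) = dnxp ∧
  d.dzS Ds (d.Qcan Ds dxp) = ∅

end DPI

/-- `Disc_D = U_D \ I_D`, the discrimination sentences w.r.t. `Ds`. -/
def Disc {L : Type*} (Ds : Set (Set L)) : Set L := ⋃₀ Ds \ ⋂₀ Ds

/-- `H` is a hitting set of the collection `S`. -/
def IsHittingSet {α : Type*} (S : Set (Set α)) (H : Set α) : Prop :=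
  H ⊆ ⋃₀ S ∧ ∀ s ∈ S, (H ∩ s).Nonempty

/-- `H` is a minimal hitting set of the collection `S`. -/
def IsMinHittingSet {α : Type*} (S : Set (Set α)) (H : Set α) : Prop :=
  IsHittingSet S H ∧ ∀ H' ⊂ H, ¬ IsHittingSet S H'

/-- `MHS S`, the set of all minimal hitting sets of `S`. -/
def MHS {α : Type*} (S : Set (Set α)) : Set (Set α) :=
  {H | IsMinHittingSet S H}


namespace DPI

variable {L : Type*} (d : DPI L)

lemma entails_mono' {X Y : Set L} {α : L} (h : d.entails X α) (hXY : X ⊆ Y) :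
    d.entails Y α := by
  have := d.entails_mono X Y α h
  rwa [Set.union_eq_self_of_subset_left hXY] at this

lemma violates_mono {X Y : Set L} (hXY : X ⊆ Y) (h : d.Violates X) : d.Violates Y := by
  rcases h with ⟨r, hr, hv⟩ | ⟨n, hn, he⟩
  · exact Or.inl ⟨r, hr, d.viol_mono r hr X Y hXY hv⟩
  · exact Or.inr ⟨n, hn, fun α hα => d.entails_mono' (he α hα) hXY⟩

lemma kstar_eq (Dj : Set L) : ((d.K \ Dj) ∪ d.UP) ∪ d.B = d.Kstar Dj := by
  simp only [Kstar]; ext x; simp; tauto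

lemma not_viol_of_diag {Dj Q : Set L} (hj : d.IsDiagnosis Dj)
    (hE : d.EntailsAll (d.Kstar Dj) Q) : ¬ d.Violates (d.Kstar Dj ∪ Q) := by
  rintro (⟨r, hr, hv⟩ | ⟨n, hn, he⟩)
  · exact hv (d.sat_entailed r hr _ Q (d.kstar_eq Dj ▸ hj.2.1 r hr) hE)
  · refine hj.2.2.2 n hn ?_
    rw [kstar_eq]
    exact fun α hα => d.entails_idem _ Q α hE (he α hα)

lemma viol_of_not_sol {D' : Set L} (h : ¬ d.IsSolutionKB ((d.K \ D') ∪ d.UP)) :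
    d.Violates (d.Kstar D') := by
  by_contra hv
  rw [Violates] at hv
  push_neg at hv
  apply h
  refine ⟨fun r hr => ?_, fun p hp α hα => ?_, fun n hn hE => ?_⟩
  · exact (d.kstar_eq D').symm ▸ hv.1 r hr
  · exact d.entails_ext _ α (Or.inl (Or.inr ⟨p, hp, hα⟩))
  · exact hv.2 n hn (d.kstar_eq D' ▸ hE)

end DPI

/-- For `|Ds| ≥ 2` and `Di ∈ Ds`, `⟨{Di}, Ds \ {Di}, ∅⟩` is a canonical
q-partition and `U_D \ Di` is a query with exactly this q-partition. -/
theorem statement6 {L : Type*} (d : DPI L) (Ds : Set (Set L))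
    (hDs : ∀ Di ∈ Ds, d.IsMinDiagnosis Di) (hcard : 2 ≤ Ds.ncard)
    (Di : Set L) (hDi : Di ∈ Ds) :
    d.IsCanonicalQPartition Ds {Di} (Ds \ {Di}) ∧
    d.IsQuery Ds (⋃₀ Ds \ Di) ∧
    d.dxS Ds (⋃₀ Ds \ Di) = {Di} ∧
    d.dnxS Ds (⋃₀ Ds \ Di) = Ds \ {Di} ∧
    d.dzS Ds (⋃₀ Ds \ Di) = ∅ := by
  set Q : Set L := ⋃₀ Ds \ Di with hQ
  have hsubK : ∀ Dj ∈ Ds, Dj ⊆ d.K := fun Dj hDj => (hDs Dj hDj).1.1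
  -- distinct minimal diagnoses are incomparable
  have hnsub : ∀ Dj ∈ Ds, Dj ≠ Di → ¬ Dj ⊆ Di := by
    intro Dj hDj hne hsub
    exact (hDs Di hDi).2 Dj (hsub.ssubset_of_ne hne) (hDs Dj hDj).1
  -- a second diagnosis exists
  obtain ⟨Dj0, hDj0, hne0⟩ := Set.exists_ne_of_one_lt_ncard (s := Ds) (by omega) Di
  -- Q is nonempty
  have hQne : Q.Nonempty := by
    obtain ⟨x, hx, hxn⟩ := Set.not_subset.mp (hnsub Dj0 hDj0 hne0)
    exact ⟨x, ⟨Dj0, hDj0, hx⟩, hxn⟩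
  -- Kstar Di entails Q
  have hEi : d.EntailsAll (d.Kstar Di) Q := by
    intro α hα
    rcases hα with ⟨hαU, hαi⟩
    rcases hαU with ⟨Dj, hDj, hαj⟩
    exact d.entails_ext _ α (Or.inl (Or.inl ⟨hsubK Dj hDj hαj, hαi⟩))
  -- every other diagnosis is put into dnx
  have hviol : ∀ Dj ∈ Ds, Dj ≠ Di → d.Violates (d.Kstar Dj ∪ Q) := by
    intro Dj hDj hne
    have hss : Dj ∩ Di ⊂ Dj := by
      refine ⟨Set.inter_subset_left, fun hsub => ?_⟩
      exact hnsub Dj hDj hne fun x hx => ((hsub hx).2)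
    have hnd : ¬ d.IsDiagnosis (Dj ∩ Di) := (hDs Dj hDj).2 _ hss
    have hnsol : ¬ d.IsSolutionKB ((d.K \ (Dj ∩ Di)) ∪ d.UP) := by
      intro hsol
      exact hnd ⟨(Set.inter_subset_left).trans (hsubK Dj hDj), hsol⟩
    refine d.violates_mono ?_ (d.viol_of_not_sol hnsol)
    -- Kstar (Dj ∩ Di) ⊆ Kstar Dj ∪ Q
    rintro x ((⟨hxK, hxn⟩ | hxB) | hxU)
    · by_cases hxj : x ∈ Dj
      · have hxi : x ∉ Di := fun hxi => hxn ⟨hxj, hxi⟩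
        exact Or.inr ⟨⟨Dj, hDj, hxj⟩, hxi⟩
      · exact Or.inl (Or.inl (Or.inl ⟨hxK, hxj⟩))
    · exact Or.inl (Or.inl (Or.inr hxB))
    · exact Or.inl (Or.inr hxU)
  -- dx(Q) = {Di}
  have hdx : d.dxS Ds Q = {Di} := by
    ext Dj
    simp only [DPI.dxS, Set.mem_setOf_eq, Set.mem_singleton_iff]
    constructor
    · rintro ⟨hDj, hE⟩
      by_contra hne
      exact d.not_viol_of_diag (hDs Dj hDj).1 hE (hviol Dj hDj hne)
    · rintro rfl
      exact ⟨hDi, hEi⟩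
  -- dnx(Q) = Ds \ {Di}
  have hdnx : d.dnxS Ds Q = Ds \ {Di} := by
    ext Dj
    simp only [DPI.dnxS, Set.mem_setOf_eq, Set.mem_diff, Set.mem_singleton_iff]
    constructor
    · rintro ⟨hDj, hV⟩
      refine ⟨hDj, fun h => ?_⟩
      subst h
      exact d.not_viol_of_diag (hDs Dj hDj).1 hEi hV
    · rintro ⟨hDj, hne⟩
      exact ⟨hDj, hviol Dj hDj hne⟩
  -- dz(Q) = ∅
  have hdz : d.dzS Ds Q = ∅ := by
    rw [DPI.dzS, hdx, hdnx]
    ext Dj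
    simp only [Set.mem_diff, Set.mem_union, Set.mem_singleton_iff, Set.mem_empty_iff_false,
      iff_false, not_and, not_not]
    tauto
  -- the canonical query for seed {Di} is exactly Q
  have hQcan : d.Qcan Ds {Di} = Q := by
    ext x
    simp only [DPI.Qcan, Set.sUnion_singleton, Set.mem_inter_iff, Set.mem_diff, hQ,
      Set.mem_sUnion, Set.mem_sInter]
    constructor
    · rintro ⟨⟨_, hxn⟩, ⟨hxU, _⟩⟩
      exact ⟨hxU, hxn⟩
    · rintro ⟨⟨Dj, hDj, hxj⟩, hxn⟩
      exact ⟨⟨hsubK Dj hDj hxj, hxn⟩, ⟨⟨Dj, hDj, hxj⟩, fun h => hxn (h Di hDi)⟩⟩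
  have hQcanne : (d.Qcan Ds {Di}).Nonempty := by rw [hQcan]; exact hQne
  refine ⟨⟨?_, ?_, ⟨Di, rfl⟩, ?_, hQcanne, ?_, ?_, ?_⟩, ⟨hQne, ?_, ?_⟩, hdx, hdnx, hdz⟩
  · exact Set.union_diff_cancel (Set.singleton_subset_iff.mpr hDi)
  · ext x; simp only [Set.mem_inter_iff, Set.mem_singleton_iff, Set.mem_diff,
      Set.mem_empty_iff_false, iff_false]; tauto
  · exact ⟨Set.singleton_subset_iff.mpr hDi,
      fun h => hne0 (Set.mem_singleton_iff.mp (h hDj0))⟩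
  · rw [hQcan]; exact hdx
  · rw [hQcan]; exact hdnx
  · rw [hQcan]; exact hdz
  · rw [hdx]; exact ⟨Di, rfl⟩
  · rw [hdnx]; exact ⟨Dj0, hDj0, hne0⟩

end KBDDiag
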